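/- Let a₁, …, a_m be positive reals with aⱼ/aₖ irrational for j ≠ k, and let N(T) denote the number of pairs (j, n) with 1 ≤ j ≤ m, n ≥ 1, and ∑_{k=1}^m ⌊n·aⱼ/aₖ⌋ ≤ T. Then N(T) = T for every positive integer T. -/

import Mathlib

theorem rank_count {α : Type*} (P : Set α) (v : α → ℝ) (hinj : Set.InjOn v P)
    (hfin : ∀ t : ℝ, (P ∩ {q | v q ≤ t}).Finite) (hinf : P.Infinite) (T : ℕ) :
    {p ∈ P | (P ∩ {q | v q ≤ v p}).ncard ≤ T}.ncard = T := by
  set r : α → ℕ := fun p => (P ∩ {q | v q ≤ v p}).ncard with hr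
  -- r ≥ 1 on P
  have hr1 : ∀ p ∈ P, 1 ≤ r p := by
    intro p hp
    have hne : (P ∩ {q | v q ≤ v p}).Nonempty := ⟨p, hp, Set.mem_setOf.mpr le_rfl⟩
    exact Set.ncard_pos (hfin (v p)) |>.mpr hne
  -- strict monotonicity
  have hmono : ∀ p ∈ P, ∀ q ∈ P, v p < v q → r p < r q := by
    intro p hp q hq hvpq
    refine Set.ncard_lt_ncard ?_ (hfin (v q))
    constructor
    · intro x ⟨hx, hxle⟩; exact ⟨hx, le_trans hxle hvpq.le⟩
    · intro hsub
      have : q ∈ P ∩ {q' | v q' ≤ v p} := hsub ⟨hq, Set.mem_setOf.mpr le_rfl⟩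
      exact absurd this.2 (not_le.mpr hvpq)
  -- r injective on P
  have hrinj : Set.InjOn r P := by
    intro p hp q hq hpq
    rcases lt_trichotomy (v p) (v q) with h | h | h
    · exact absurd hpq (hmono p hp q hq h).ne
    · exact hinj hp hq h
    · exact absurd hpq.symm (hmono q hq p hp h).ne
  -- B nonempty
  have hB : {p ∈ P | T < r p}.Nonempty := by
    by_contra hB
    rw [Set.not_nonempty_iff_eq_empty] at hB
    have himg : (r '' P) ⊆ Set.Iic T := by
      rintro _ ⟨p, hp, rfl⟩
      simp only [Set.mem_Iic]
      by_contra h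
      have : p ∈ {p ∈ P | T < r p} := ⟨hp, by omega⟩
      rw [hB] at this
      exact this
    have : (r '' P).Infinite := hinf.image hrinj
    exact this ((Set.finite_Iic (T : ℕ)).subset himg)
  obtain ⟨b, hbP, hbT⟩ := hB
  -- minimal element c of B w.r.t. v
  have hFfin : ({p ∈ P | T < r p} ∩ {q | v q ≤ v b}).Finite :=
    (hfin (v b)).subset (by intro x ⟨⟨h1, _⟩, h2⟩; exact ⟨h1, h2⟩)
  obtain ⟨c, ⟨⟨hcP, hcT⟩, hcb⟩, hcmin⟩ :=
    Set.exists_min_image _ v hFfin ⟨b, ⟨hbP, hbT⟩, Set.mem_setOf.mpr le_rfl⟩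
  have hcmin' : ∀ p ∈ P, T < r p → v c ≤ v p := by
    intro p hp hpT
    rcases le_or_gt (v p) (v b) with h | h
    · exact hcmin p ⟨⟨hp, hpT⟩, h⟩
    · exact le_trans hcb h.le
  -- goal set equals initial segment minus c
  have hGeq : {p ∈ P | r p ≤ T} = (P ∩ {q | v q ≤ v c}) \ {c} := by
    ext p
    constructor
    · rintro ⟨hp, hpT⟩
      have hpc : p ≠ c := by rintro rfl; omega
      refine ⟨⟨hp, ?_⟩, hpc⟩
      by_contra h
      simp only [Set.mem_setOf_eq, not_le] at h
      have := hmono c hcP p hp h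
      omega
    · rintro ⟨⟨hp, hple⟩, hpc⟩
      have hlt : v p < v c := lt_of_le_of_ne hple (fun h => hpc (hinj hp hcP h))
      refine ⟨hp, ?_⟩
      by_contra h
      push_neg at h
      exact absurd (hcmin' p hp h) (not_le.mpr hlt)
  have hGfin : ({p ∈ P | r p ≤ T}).Finite := by
    rw [hGeq]; exact ((hfin (v c)).subset Set.diff_subset)
  have hcard1 : ({p ∈ P | r p ≤ T}).ncard = r c - 1 := by
    rw [hGeq]
    exact Set.ncard_diff_singleton_of_mem ⟨hcP, Set.mem_setOf.mpr le_rfl⟩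
  -- upper bound: ncard ≤ T via injection into Icc 1 T
  have hub : ({p ∈ P | r p ≤ T}).ncard ≤ T := by
    have hinjG : Set.InjOn r {p ∈ P | r p ≤ T} := hrinj.mono (fun x hx => hx.1)
    have h1 : (r '' {p ∈ P | r p ≤ T}).ncard = ({p ∈ P | r p ≤ T}).ncard :=
      Set.ncard_image_of_injOn hinjG
    have h2 : r '' {p ∈ P | r p ≤ T} ⊆ ↑(Finset.Icc 1 T) := by
      rintro _ ⟨p, ⟨hp, hpT⟩, rfl⟩
      simp only [Finset.coe_Icc, Set.mem_Icc]
      exact ⟨hr1 p hp, hpT⟩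
    calc ({p ∈ P | r p ≤ T}).ncard = (r '' {p ∈ P | r p ≤ T}).ncard := h1.symm
      _ ≤ (↑(Finset.Icc 1 T) : Set ℕ).ncard := Set.ncard_le_ncard h2 (Finset.finite_toSet _)
      _ = T := by rw [Set.ncard_coe_finset, Nat.card_Icc]; omega
  show ({p ∈ P | r p ≤ T}).ncard = T
  have h1T : 1 ≤ r c := hr1 c hcP
  omega

theorem count_lemma {m : ℕ} (a : Fin m → ℝ) (ha : ∀ i, 0 < a i) (t : ℝ) (ht : 0 < t) :
    ({q : Fin m × ℕ | 0 < q.2 ∧ (q.2 : ℝ) * a q.1 ≤ t}).ncard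
      = ∑ k, (⌊t / a k⌋).toNat := by
  classical
  set F : Finset (Fin m × ℕ) :=
    Finset.univ.biUnion
      (fun k => (Finset.Icc 1 (⌊t / a k⌋).toNat).image (fun n => (k, n))) with hF
  have hset : {q : Fin m × ℕ | 0 < q.2 ∧ (q.2 : ℝ) * a q.1 ≤ t} = ↑F := by
    ext ⟨j, n⟩
    simp only [hF, Set.mem_setOf_eq, Finset.mem_coe,
      Finset.mem_biUnion, Finset.mem_univ, true_and, Finset.mem_image,
      Finset.mem_Icc]
    constructor
    · rintro ⟨hn, hle⟩
      refine ⟨j, n, ⟨hn, ?_⟩, rfl⟩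
      rw [Int.le_toNat (Int.floor_nonneg.mpr (le_of_lt (div_pos ht (ha j)))),
        Int.le_floor, le_div_iff₀ (ha j)]
      exact_mod_cast hle
    · rintro ⟨k, n', ⟨h1, h2⟩, heq⟩
      obtain ⟨rfl, rfl⟩ : k = j ∧ n' = n := by
        exact ⟨congrArg Prod.fst heq, congrArg Prod.snd heq⟩
      refine ⟨h1, ?_⟩
      rw [Int.le_toNat (Int.floor_nonneg.mpr (le_of_lt (div_pos ht (ha k)))),
        Int.le_floor, le_div_iff₀ (ha k)] at h2
      exact_mod_cast h2
  rw [hset, Set.ncard_coe_finset, hF, Finset.card_biUnion]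
  · congr 1
    ext k
    rw [Finset.card_image_of_injective _ (fun x y h => (Prod.mk.injEq _ _ _ _ ▸ h).2),
      Nat.card_Icc]
    omega
  · intro k _ k' _ hkk
    simp only [Finset.disjoint_left, Finset.mem_image]
    rintro _ ⟨n, _, rfl⟩ ⟨n', _, h⟩
    exact hkk (congrArg Prod.fst h).symm

theorem tamura_counting (m : ℕ) (hm : 1 ≤ m) (a : Fin m → ℝ)
    (ha : ∀ i, 0 < a i)
    (hirr : ∀ j k : Fin m, j ≠ k → Irrational (a j / a k))
    (T : ℕ) (hT : 0 < T) :
    ({p : Fin m × ℕ | 0 < p.2 ∧ ∑ k, ⌊(p.2 : ℝ) * a p.1 / a k⌋ ≤ (T : ℤ)}).ncard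
      = T := by
  classical
  set P : Set (Fin m × ℕ) := {p | 0 < p.2} with hP
  set v : Fin m × ℕ → ℝ := fun p => (p.2 : ℝ) * a p.1 with hv
  -- injectivity
  have hinj : Set.InjOn v P := by
    rintro ⟨j, n⟩ hp ⟨k, n'⟩ hq hvpq
    simp only [hv] at hvpq
    have hn : 0 < n := hp
    have hn' : 0 < n' := hq
    by_cases hjk : j = k
    · subst hjk
      have : (n : ℝ) = (n' : ℝ) := mul_right_cancel₀ (ne_of_gt (ha j)) hvpq
      have : n = n' := by exact_mod_cast this
      simp [this]
    · exfalso
      have hkne : a k ≠ 0 := ne_of_gt (ha k)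
      have hnne : (n : ℝ) ≠ 0 := by positivity
      have heq : a j / a k = (n' : ℝ) / (n : ℝ) := by
        field_simp
        linarith [hvpq]
      exact (hirr j k hjk) ⟨(n' : ℚ) / (n : ℚ), by push_cast; exact heq.symm⟩
  -- finiteness of lower sets
  have hfin : ∀ t : ℝ, (P ∩ {q | v q ≤ t}).Finite := by
    intro t
    set B : ℕ := Finset.univ.sup (fun k => ⌈t / a k⌉₊) with hB
    apply Set.Finite.subset (Set.Finite.prod (Set.finite_univ (α := Fin m)) (Set.finite_Iic B))
    rintro ⟨j, n⟩ ⟨hp, hle⟩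
    simp only [hv, Set.mem_setOf_eq] at hle
    refine ⟨Set.mem_univ _, ?_⟩
    simp only [Set.mem_Iic]
    have h1 : (n : ℝ) ≤ t / a j := (le_div_iff₀ (ha j)).mpr hle
    have h2 : n ≤ ⌈t / a j⌉₊ := by
      exact_mod_cast h1.trans (Nat.le_ceil _)
    exact h2.trans (Finset.le_sup (f := fun k => ⌈t / a k⌉₊) (Finset.mem_univ j))
  -- infinitude
  have hinf : P.Infinite := by
    apply Set.infinite_of_injective_forall_mem
      (f := fun n : ℕ => ((⟨0, hm⟩ : Fin m), n + 1))
      (fun x y hxy => by simpa using congrArg Prod.snd hxy)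
      (fun n => Nat.succ_pos n)
  -- rewrite the set
  have hsets : {p : Fin m × ℕ | 0 < p.2 ∧ ∑ k, ⌊(p.2 : ℝ) * a p.1 / a k⌋ ≤ (T : ℤ)}
      = {p ∈ P | (P ∩ {q | v q ≤ v p}).ncard ≤ T} := by
    ext p
    simp only [Set.mem_setOf_eq]
    constructor
    · rintro ⟨hp, hsum⟩
      refine ⟨hp, ?_⟩
      have ht : 0 < v p := mul_pos (by exact_mod_cast hp) (ha p.1)
      have hseteq : P ∩ {q | v q ≤ v p}
          = {q : Fin m × ℕ | 0 < q.2 ∧ (q.2 : ℝ) * a q.1 ≤ v p} := by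
        ext q; simp [hP, hv, and_comm]
      rw [hseteq, count_lemma a ha (v p) ht]
      have hcast : ((∑ k, (⌊v p / a k⌋).toNat : ℕ) : ℤ) = ∑ k, ⌊v p / a k⌋ := by
        push_cast
        refine Finset.sum_congr rfl (fun k _ => ?_)
        exact Int.toNat_of_nonneg (Int.floor_nonneg.mpr (le_of_lt (div_pos ht (ha k))))
      have : ((∑ k, (⌊v p / a k⌋).toNat : ℕ) : ℤ) ≤ (T : ℤ) := by
        rw [hcast]
        exact hsum
      exact_mod_cast this
    · rintro ⟨hp, hcard⟩
      refine ⟨hp, ?_⟩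
      have ht : 0 < v p := mul_pos (by exact_mod_cast hp) (ha p.1)
      have hseteq : P ∩ {q | v q ≤ v p}
          = {q : Fin m × ℕ | 0 < q.2 ∧ (q.2 : ℝ) * a q.1 ≤ v p} := by
        ext q; simp [hP, hv, and_comm]
      rw [hseteq, count_lemma a ha (v p) ht] at hcard
      have hcast : ((∑ k, (⌊v p / a k⌋).toNat : ℕ) : ℤ) = ∑ k, ⌊v p / a k⌋ := by
        push_cast
        refine Finset.sum_congr rfl (fun k _ => ?_)
        exact Int.toNat_of_nonneg (Int.floor_nonneg.mpr (le_of_lt (div_pos ht (ha k))))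
      calc ∑ k, ⌊(p.2 : ℝ) * a p.1 / a k⌋ = ((∑ k, (⌊v p / a k⌋).toNat : ℕ) : ℤ) := by
            rw [hcast]
        _ ≤ (T : ℤ) := by exact_mod_cast hcard
  rw [hsets]
  exact rank_count P v hinj hfin hinf T
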